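/- Let R be a commutative discrete valuation ring with maximal ideal P. The Prüfer module R_{P^∞} = colim (R/P → R/P² → R/P³ → ⋯), with transition maps given by multiplication by a uniformizer, is an injective R-module, and together with the fraction field Q(R) it gives exactly the indecomposable injective R-modules up to isomorphism. -/

import Mathlib

open CategoryTheory CategoryTheory.Limits

noncomputable section

variable (R : Type) [CommRing R] [IsDomain R] [IsDiscreteValuationRing R]

/-- The maximal ideal of the DVR `R`. -/
abbrev P : Ideal R := IsLocalRing.maximalIdeal R

/-- The transition map `R/P^(n+1) → R/P^(n+2)` induced by multiplication with `p`. -/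
def transition (p : R) (hp : P R = Ideal.span {p}) (n : ℕ) :
    ModuleCat.of R (R ⧸ (P R ^ (n + 1))) ⟶ ModuleCat.of R (R ⧸ (P R ^ (n + 2))) :=
  ModuleCat.ofHom <| Submodule.mapQ (P R ^ (n + 1)) (P R ^ (n + 2)) (LinearMap.lsmul R R p)
    (by
      intro x hx
      simp only [Submodule.mem_comap, LinearMap.lsmul_apply]
      have hpP : p ∈ P R := by
        rw [hp]; exact Ideal.subset_span rfl
      have : p * x ∈ P R * P R ^ (n + 1) := Ideal.mul_mem_mul hpP hx
      rwa [← pow_succ'] at this)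

/-- The diagram `R/P → R/P² → R/P³ → ⋯` with transition maps multiplication by `p`. -/
def pruferDiagram (p : R) (hp : P R = Ideal.span {p}) : ℕ ⥤ ModuleCat R :=
  Functor.ofSequence (transition R p hp)

/-- The Prüfer module `R_{P^∞} = colim (R/P → R/P² → ⋯)`. -/
def prufer (p : R) (hp : P R = Ideal.span {p}) : ModuleCat R :=
  colimit (pruferDiagram R p hp)

/-- An `R`-module is indecomposable if it is nonzero and any direct sum decomposition
has a trivial factor. -/
def IsIndecomposableMod (M : Type) [AddCommGroup M] [Module R M] : Prop :=
  ¬ Subsingleton M ∧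
    ∀ (N L : Type) (_ : AddCommGroup N) (_ : Module R N) (_ : AddCommGroup L)
      (_ : Module R L), Nonempty (M ≃ₗ[R] (N × L)) → Subsingleton N ∨ Subsingleton L

/-! ### Auxiliary lemmas -/

section Aux

variable (p : R) (hp : P R = Ideal.span {p})

include hp

lemma hom_smul {M N : ModuleCat R} (f : M ⟶ N) (c : R) (x : M) :
    f (c • x) = c • f x := map_smul f.hom c x

lemma p_ne_zero : p ≠ 0 := fun h =>
  IsDiscreteValuationRing.not_a_field R
    (hp.trans (by rw [h]; exact Ideal.span_singleton_eq_bot.mpr rfl))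

lemma p_irreducible : Irreducible p :=
  IsDiscreteValuationRing.irreducible_of_span_eq_maximalIdeal p (p_ne_zero R p hp) hp

lemma P_pow_eq (k : ℕ) : (P R) ^ k = Ideal.span {p ^ k} := by
  rw [hp, Ideal.span_singleton_pow]

/-- any `p`-divisible module over the DVR `R` is injective. -/
lemma injective_of_divisible {M : Type} [AddCommGroup M] [Module R M]
    (hdiv : ∀ m : M, ∃ m', p • m' = m) : Module.Injective R M := by
  have hdivpow : ∀ (k : ℕ) (m : M), ∃ m', p ^ k • m' = m := by
    intro k
    induction k with
    | zero => intro m; exact ⟨m, by simp⟩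
    | succ k ih =>
      intro m
      obtain ⟨m', hm'⟩ := hdiv m
      obtain ⟨m'', hm''⟩ := ih m'
      exact ⟨m'', by rw [pow_succ, mul_comm, mul_smul, hm'', hm']⟩
  apply Module.Baer.injective
  intro I g
  by_cases hI : I = ⊥
  · subst hI
    refine ⟨0, fun x hx => ?_⟩
    have h0 : (⟨x, hx⟩ : ((⊥ : Ideal R) : Submodule R R)) = 0 := Subsingleton.elim _ _
    rw [h0, map_zero]
    simp
  · obtain ⟨k, hk⟩ := IsDiscreteValuationRing.ideal_eq_span_pow_irreducible hI
      (p_irreducible R p hp)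
    have hpk : p ^ k ∈ I := by rw [hk]; exact Ideal.subset_span rfl
    obtain ⟨y, hy⟩ := hdivpow k (g ⟨p ^ k, hpk⟩)
    refine ⟨LinearMap.toSpanSingleton R M y, fun x hx => ?_⟩
    obtain ⟨c, hc⟩ := Ideal.mem_span_singleton'.mp (hk ▸ hx)
    have : (⟨x, hx⟩ : I) = c • ⟨p ^ k, hpk⟩ := by
      ext; simp [← hc, smul_eq_mul]
    rw [this, map_smul, ← hy]
    simp [LinearMap.toSpanSingleton_apply, ← mul_smul, ← hc, mul_comm]

/-- a "uniform" module is indecomposable. -/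
lemma indecomposable_of_uniform {M : Type} [AddCommGroup M] [Module R M]
    (hnt : ¬ Subsingleton M)
    (hu : ∀ z w : M, z ≠ 0 → w ≠ 0 → ∃ c d : R, c • z = d • w ∧ c • z ≠ 0) :
    IsIndecomposableMod R M := by
  refine ⟨hnt, fun N L _ _ _ _ he => ?_⟩
  obtain ⟨e⟩ := he
  by_contra hcon
  push_neg at hcon
  obtain ⟨hN, hL⟩ := hcon
  haveI : Nontrivial N := hN
  haveI : Nontrivial L := hL
  obtain ⟨n, hn⟩ := exists_ne (0 : N)
  obtain ⟨l, hl⟩ := exists_ne (0 : L)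
  have hz : e.symm (n, 0) ≠ 0 := fun h => hn (by simpa using congrArg e h)
  have hw : e.symm (0, l) ≠ 0 := fun h => hl (by simpa using congrArg e h)
  obtain ⟨c, d, hcd, hcz⟩ := hu _ _ hz hw
  apply hcz
  have h1 : e (c • e.symm (n, 0)) = (c • n, 0) := by
    rw [map_smul, e.apply_symm_apply, Prod.smul_mk, smul_zero]
  have h2 : e (d • e.symm (0, l)) = (0, d • l) := by
    rw [map_smul, e.apply_symm_apply, Prod.smul_mk, smul_zero]
  have h3 : ((c • n : N), (0 : L)) = ((0 : N), (d • l : L)) := by rw [← h1, ← h2, hcd]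
  have hcn : c • n = 0 := (Prod.ext_iff.mp h3).1
  have h4 : e (c • e.symm (n, 0)) = 0 := by rw [h1, hcn]; rfl
  have h5 := congrArg e.symm h4
  rwa [e.symm_apply_apply, map_zero] at h5

/-! ### Structure of the Prüfer module -/

lemma transition_mk (n : ℕ) (r : R) :
    transition R p hp n (Submodule.Quotient.mk r) = Submodule.Quotient.mk (p * r) := by
  rfl

lemma transition_injective (n : ℕ) : Function.Injective (transition R p hp n) := by
  intro x y hxy
  obtain ⟨r, rfl⟩ := Submodule.Quotient.mk_surjective _ x
  obtain ⟨s, rfl⟩ := Submodule.Quotient.mk_surjective _ y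
  rw [transition_mk, transition_mk] at hxy
  rw [Submodule.Quotient.eq] at hxy ⊢
  have : p * r - p * s ∈ Ideal.span {p ^ (n + 2)} := by rwa [← P_pow_eq R p hp]
  obtain ⟨c, hc⟩ := Ideal.mem_span_singleton'.mp this
  rw [P_pow_eq R p hp]
  refine Ideal.mem_span_singleton'.mpr ⟨c, ?_⟩
  have hpne := p_ne_zero R p hp
  have : p * (c * p ^ (n + 1)) = p * (r - s) := by
    rw [mul_sub]; rw [← hc]; ring
  have := mul_left_cancel₀ hpne this
  rw [← this]

lemma diagram_map_injective {m n : ℕ} (h : m ≤ n) :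
    Function.Injective ((pruferDiagram R p hp).map (homOfLE h)) := by
  induction h with
  | refl =>
    have h1 : (homOfLE (le_refl m) : (m : ℕ) ⟶ (m : ℕ)) = 𝟙 _ := Subsingleton.elim _ _
    rw [h1, CategoryTheory.Functor.map_id]
    exact fun a b hab => hab
  | @step n h ih =>
    have : (homOfLE (Nat.le_succ_of_le h) : (m : ℕ) ⟶ (n + 1 : ℕ)) =
        homOfLE h ≫ homOfLE (Nat.le_add_right n 1) := by
      apply Subsingleton.elim
    rw [this, Functor.map_comp]
    have hsucc : Function.Injective ((pruferDiagram R p hp).map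
        (homOfLE (Nat.le_add_right n 1))) := by
      show Function.Injective ((Functor.ofSequence (transition R p hp)).map _)
      rw [Functor.ofSequence_map_homOfLE_succ]
      exact transition_injective R p hp n
    intro a b hab
    exact ih (hsucc hab)

lemma iota_injective (n : ℕ) :
    Function.Injective (colimit.ι (pruferDiagram R p hp) n) := by
  intro x y hxy
  obtain ⟨k, f, g, hfg⟩ :=
    (Concrete.colimit_rep_eq_iff_exists (pruferDiagram R p hp) x y).mp hxy
  obtain rfl : f = g := Subsingleton.elim _ _
  have : f = homOfLE (leOfHom f) := Subsingleton.elim _ _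
  rw [this] at hfg
  exact diagram_map_injective R p hp (leOfHom f) hfg

lemma iota_exists (x : (prufer R p hp : Type)) :
    ∃ (n : ℕ) (r : R), colimit.ι (pruferDiagram R p hp) n (Submodule.Quotient.mk r) = x := by
  obtain ⟨n, y, hy⟩ := Concrete.colimit_exists_rep (pruferDiagram R p hp) x
  obtain ⟨r, rfl⟩ := Submodule.Quotient.mk_surjective _ (show R ⧸ (P R ^ (n+1)) from y)
  exact ⟨n, r, hy⟩

lemma iota_w {m n : ℕ} (h : m ≤ n) (x : (R ⧸ (P R ^ (m+1)) : Type)) :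
    colimit.ι (pruferDiagram R p hp) n ((pruferDiagram R p hp).map (homOfLE h) x) =
      colimit.ι (pruferDiagram R p hp) m x := by
  have := colimit.w (pruferDiagram R p hp) (homOfLE h)
  calc colimit.ι (pruferDiagram R p hp) n ((pruferDiagram R p hp).map (homOfLE h) x)
      = ((pruferDiagram R p hp).map (homOfLE h) ≫ colimit.ι (pruferDiagram R p hp) n) x := rfl
    _ = colimit.ι (pruferDiagram R p hp) m x := by rw [this]

lemma iota_succ (n : ℕ) (r : R) :
    colimit.ι (pruferDiagram R p hp) (n+1) (Submodule.Quotient.mk (p * r)) =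
      colimit.ι (pruferDiagram R p hp) n (Submodule.Quotient.mk r) := by
  have h3 : (pruferDiagram R p hp).map (homOfLE (Nat.le_add_right n 1)) = transition R p hp n :=
    Functor.ofSequence_map_homOfLE_succ _ n
  have h2 : (pruferDiagram R p hp).map (homOfLE (Nat.le_add_right n 1))
      (Submodule.Quotient.mk r) = Submodule.Quotient.mk (p * r) := by
    rw [h3]
    exact transition_mk R p hp n r
  rw [← h2]
  exact iota_w R p hp (Nat.le_add_right n 1) _

lemma prufer_divisible (x : (prufer R p hp : Type)) : ∃ y, p • y = x := by
  obtain ⟨n, r, rfl⟩ := iota_exists R p hp x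
  refine ⟨colimit.ι (pruferDiagram R p hp) (n+1) (Submodule.Quotient.mk r), ?_⟩
  have h1 : p • (Submodule.Quotient.mk r : R ⧸ ((P R) ^ (n+2) : Ideal R)) =
      Submodule.Quotient.mk (p * r) := by
    rw [← Submodule.Quotient.mk_smul]; rfl
  erw [← hom_smul R p hp, h1]
  exact iota_succ R p hp n r

/-- every nonzero element of `R/P^(k+1)` has a multiple equal to `mk (p^k)`. -/
lemma quot_cyclic (k : ℕ) (x : R ⧸ ((P R) ^ (k+1) : Ideal R)) (hx : x ≠ 0) :
    ∃ c : R, c • x = Submodule.Quotient.mk (p ^ k) := by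
  obtain ⟨r, rfl⟩ := Submodule.Quotient.mk_surjective _ x
  have hrmem : r ∉ ((P R) ^ (k+1) : Ideal R) := fun h => hx (Submodule.Quotient.mk_eq_zero _ |>.mpr h)
  have hr0 : r ≠ 0 := fun h => hrmem (h ▸ Submodule.zero_mem _)
  obtain ⟨a, u, hau⟩ := IsDiscreteValuationRing.eq_unit_mul_pow_irreducible hr0 (p_irreducible R p hp)
  have ha : a ≤ k := by
    by_contra hak
    push_neg at hak
    apply hrmem
    rw [P_pow_eq R p hp]
    refine Ideal.mem_span_singleton'.mpr ⟨↑u * p ^ (a - (k+1)), ?_⟩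
    rw [hau, mul_assoc, ← pow_add]
    congr 2
    omega
  refine ⟨↑u⁻¹ * p ^ (k - a), ?_⟩
  rw [← Submodule.Quotient.mk_smul, smul_eq_mul]
  congr 1
  rw [hau]
  have : (↑u⁻¹ * p ^ (k - a)) * (↑u * p ^ a) = (↑u⁻¹ * ↑u) * (p ^ (k - a) * p ^ a) := by ring
  rw [this, ← pow_add]
  have huu : (↑u⁻¹ * ↑u : R) = 1 := by
    rw [← Units.val_mul, inv_mul_cancel, Units.val_one]
  rw [huu, one_mul]
  congr 1
  omega

lemma mk_pk_ne_zero (k : ℕ) :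
    (Submodule.Quotient.mk (p ^ k) : R ⧸ ((P R) ^ (k+1) : Ideal R)) ≠ 0 := by
  rw [Ne, Submodule.Quotient.mk_eq_zero, P_pow_eq R p hp]
  intro h
  obtain ⟨c, hc⟩ := Ideal.mem_span_singleton'.mp h
  have hpne := p_ne_zero R p hp
  have : p ^ k * (c * p - 1) = 0 := by
    rw [mul_sub, mul_one]
    rw [show p ^ k * (c * p) = c * p ^ (k+1) by ring, hc]
    ring
  rcases mul_eq_zero.mp this with h1 | h2
  · exact pow_ne_zero k hpne h1
  · have hcp : c * p = 1 := by linear_combination h2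
    exact (p_irreducible R p hp).not_isUnit (IsUnit.of_mul_eq_one c (by rw [mul_comm]; exact hcp))

lemma prufer_nontrivial : ¬ Subsingleton (prufer R p hp : Type) := by
  have h1 : (Submodule.Quotient.mk (1 : R) : R ⧸ ((P R) ^ (0+1) : Ideal R)) ≠ 0 := by
    have := mk_pk_ne_zero R p hp 0
    simpa using this
  intro hs
  apply h1
  apply iota_injective R p hp 0
  erw [map_zero]
  exact hs.elim _ _

lemma prufer_uniform (z w : (prufer R p hp : Type)) (hz : z ≠ 0) (hw : w ≠ 0) :
    ∃ c d : R, c • z = d • w ∧ c • z ≠ 0 := by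
  obtain ⟨m, r, rfl⟩ := iota_exists R p hp z
  obtain ⟨n, s, rfl⟩ := iota_exists R p hp w
  set F := pruferDiagram R p hp
  set k := max m n with hk
  obtain ⟨x', hx'⟩ : ∃ x' : R ⧸ ((P R) ^ (k+1) : Ideal R),
      x' = F.map (homOfLE (le_max_left m n)) (Submodule.Quotient.mk r) := ⟨_, rfl⟩
  obtain ⟨y', hy'⟩ : ∃ y' : R ⧸ ((P R) ^ (k+1) : Ideal R),
      y' = F.map (homOfLE (le_max_right m n)) (Submodule.Quotient.mk s) := ⟨_, rfl⟩
  have hzx : colimit.ι F k x' = colimit.ι F m (Submodule.Quotient.mk r) := by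
    rw [hx']; exact iota_w R p hp (le_max_left m n) _
  have hwy : colimit.ι F k y' = colimit.ι F n (Submodule.Quotient.mk s) := by
    rw [hy']; exact iota_w R p hp (le_max_right m n) _
  have hx'0 : x' ≠ 0 := by
    intro h
    apply hz
    rw [← hzx, h]; erw [map_zero]; rfl
  have hy'0 : y' ≠ 0 := by
    intro h
    apply hw
    rw [← hwy, h]; erw [map_zero]; rfl
  obtain ⟨c, hc⟩ := quot_cyclic R p hp k x' hx'0
  obtain ⟨d, hd⟩ := quot_cyclic R p hp k y' hy'0
  refine ⟨c, d, ?_, ?_⟩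
  · rw [← hzx, ← hwy]; erw [← hom_smul R p hp, ← hom_smul R p hp, hc, hd]
  · rw [← hzx]; erw [← hom_smul R p hp, hc]
    intro h
    apply mk_pk_ne_zero R p hp k
    apply iota_injective R p hp k
    erw [map_zero]
    exact h


lemma hom_comp_apply {A B C : ModuleCat R} (f : A ⟶ B) (g : B ⟶ C) (x : A) :
    (f ≫ g) x = g (f x) := rfl

lemma exists_mul_eq_pow (k : ℕ) (r : R) (hr : r ∉ ((P R) ^ (k+1) : Ideal R)) :
    ∃ c : R, c * r = p ^ k := by
  have hr0 : r ≠ 0 := fun h => hr (h ▸ Submodule.zero_mem _)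
  obtain ⟨a, u, hau⟩ := IsDiscreteValuationRing.eq_unit_mul_pow_irreducible hr0
    (p_irreducible R p hp)
  have ha : a ≤ k := by
    by_contra hak
    push_neg at hak
    apply hr
    rw [P_pow_eq R p hp]
    refine Ideal.mem_span_singleton'.mpr ⟨↑u * p ^ (a - (k+1)), ?_⟩
    rw [hau, mul_assoc, ← pow_add]
    congr 2
    omega
  refine ⟨↑u⁻¹ * p ^ (k - a), ?_⟩
  rw [hau]
  have h1 : (↑u⁻¹ * p ^ (k - a)) * (↑u * p ^ a) = (↑u⁻¹ * ↑u) * (p ^ (k - a) * p ^ a) := by ring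
  rw [h1, ← pow_add]
  have huu : (↑u⁻¹ * ↑u : R) = 1 := by
    rw [← Units.val_mul, inv_mul_cancel, Units.val_one]
  rw [huu, one_mul]
  congr 1
  omega

lemma divisible_of_injective {M : Type} [AddCommGroup M] [Module R M]
    (hM : Module.Injective R M) (m : M) : ∃ m', p • m' = m := by
  have hinj : Function.Injective (LinearMap.lsmul R R p) := fun a b hab =>
    mul_left_cancel₀ (p_ne_zero R p hp) hab
  obtain ⟨h, hh⟩ := hM.out (LinearMap.lsmul R R p) hinj (LinearMap.toSpanSingleton R M m)
  refine ⟨h 1, ?_⟩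
  have h1 := hh 1
  rw [LinearMap.toSpanSingleton_apply, one_smul] at h1
  have h2 : (LinearMap.lsmul R R p) 1 = p := by simp
  rw [h2] at h1
  calc p • h 1 = h (p • 1) := (map_smul h p 1).symm
    _ = h p := by rw [smul_eq_mul, mul_one]
    _ = m := h1

lemma fraction_nontrivial : ¬ Subsingleton (FractionRing R) := fun hs =>
  one_ne_zero (hs.elim (1 : FractionRing R) 0)

lemma fraction_divisible (m : FractionRing R) : ∃ m', p • m' = m := by
  have hp0 : algebraMap R (FractionRing R) p ≠ 0 := fun h =>
    p_ne_zero R p hp ((IsFractionRing.to_map_eq_zero_iff (K := FractionRing R)).mp h)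
  refine ⟨(algebraMap R (FractionRing R) p)⁻¹ * m, ?_⟩
  rw [Algebra.smul_def, ← mul_assoc, mul_inv_cancel₀ hp0, one_mul]

lemma fraction_uniform (z w : FractionRing R) (hz : z ≠ 0) (hw : w ≠ 0) :
    ∃ c d : R, c • z = d • w ∧ c • z ≠ 0 := by
  obtain ⟨⟨a, b⟩, hab⟩ := IsLocalization.mk'_surjective (nonZeroDivisors R) z
  obtain ⟨⟨a', b'⟩, hab'⟩ := IsLocalization.mk'_surjective (nonZeroDivisors R) w
  dsimp only at hab hab'
  have ha : a ≠ 0 := by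
    intro h
    apply hz
    rw [← hab, h, IsLocalization.mk'_zero]
  have ha' : a' ≠ 0 := by
    intro h
    apply hw
    rw [← hab', h, IsLocalization.mk'_zero]
  have hbz : (b : R) • z = algebraMap R (FractionRing R) a := by
    rw [Algebra.smul_def, ← hab, IsLocalization.mk'_spec']
  have hbw : (b' : R) • w = algebraMap R (FractionRing R) a' := by
    rw [Algebra.smul_def, ← hab', IsLocalization.mk'_spec']
  have key : (a' * (b : R)) • z = algebraMap R (FractionRing R) (a' * a) := by
    rw [mul_smul, hbz, Algebra.smul_def, ← map_mul]
  refine ⟨a' * (b : R), a * (b' : R), ?_, ?_⟩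
  · rw [key, mul_smul, hbw, Algebra.smul_def, ← map_mul, mul_comm a' a]
  · rw [key]
    intro h
    exact mul_ne_zero ha' ha ((IsFractionRing.to_map_eq_zero_iff (K := FractionRing R)).mp h)

lemma iso_prufer {M : Type} [AddCommGroup M] [Module R M]
    (hdiv : ∀ m : M, ∃ m', p • m' = m) (hind : IsIndecomposableMod R M)
    (x : M) (hx0 : x ≠ 0) (hxp : p • x = 0) :
    Nonempty (M ≃ₗ[R] prufer R p hp) := by
  classical
  -- the sequence of elements `y n` with `y 0 = x` and `p • y (n+1) = y n`
  let y : ℕ → M := fun n => Nat.rec x (fun _ yn => Classical.choose (hdiv yn)) n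
  have hy0 : y 0 = x := rfl
  have hysucc : ∀ n, p • y (n+1) = y n := fun n => Classical.choose_spec (hdiv (y n))
  have hyann : ∀ n, p ^ (n+1) • y n = 0 := by
    intro n
    induction n with
    | zero => rw [pow_one]; rw [hy0]; exact hxp
    | succ n ih =>
      calc p ^ (n+2) • y (n+1) = p ^ (n+1) • (p • y (n+1)) := by
            rw [← mul_smul, ← pow_succ]
        _ = p ^ (n+1) • y n := by rw [hysucc]
        _ = 0 := ih
  have hyx : ∀ n, p ^ n • y n = x := by
    intro n
    induction n with
    | zero => rw [pow_zero, one_smul, hy0]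
    | succ n ih =>
      calc p ^ (n+1) • y (n+1) = p ^ n • (p • y (n+1)) := by
            rw [← mul_smul, ← pow_succ]
        _ = p ^ n • y n := by rw [hysucc]
        _ = x := ih
  have hker : ∀ n : ℕ, ((P R) ^ (n+1) : Ideal R) ≤
      LinearMap.ker (LinearMap.toSpanSingleton R M (y n)) := by
    intro n r hr
    obtain ⟨c, hc⟩ := Ideal.mem_span_singleton'.mp ((P_pow_eq R p hp (n+1)) ▸ hr)
    rw [LinearMap.mem_ker, LinearMap.toSpanSingleton_apply, ← hc, mul_smul, hyann, smul_zero]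
  let g : ∀ n : ℕ, (pruferDiagram R p hp).obj n ⟶ ModuleCat.of R M := fun n =>
    show ModuleCat.of R (R ⧸ ((P R) ^ (n+1) : Ideal R)) ⟶ ModuleCat.of R M from
      ModuleCat.ofHom (Submodule.liftQ _ (LinearMap.toSpanSingleton R M (y n)) (hker n))
  have hg_mk : ∀ (n : ℕ) (r : R), g n (Submodule.Quotient.mk r) = r • y n := fun n r => rfl
  have hnat : ∀ n : ℕ, (pruferDiagram R p hp).map (homOfLE (n.le_add_right 1)) ≫ g (n+1) =
      g n ≫ ((Functor.const ℕ).obj (ModuleCat.of R M)).map (homOfLE (n.le_add_right 1)) := by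
    intro n
    show (pruferDiagram R p hp).map (homOfLE (n.le_add_right 1)) ≫ g (n+1) =
      g n ≫ 𝟙 (ModuleCat.of R M)
    rw [Category.comp_id]
    have h3 : (pruferDiagram R p hp).map (homOfLE (Nat.le_add_right n 1)) =
        transition R p hp n := Functor.ofSequence_map_homOfLE_succ _ n
    rw [h3]
    refine ModuleCat.hom_ext (LinearMap.ext fun t => ?_)
    obtain ⟨r, rfl⟩ := Submodule.Quotient.mk_surjective _ t
    erw [hom_comp_apply R p hp]
    show (g (n+1)) ((transition R p hp n) (Submodule.Quotient.mk r)) =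
      (g n) (Submodule.Quotient.mk r)
    rw [transition_mk R p hp n r, hg_mk, hg_mk, mul_comm p r, mul_smul, hysucc]
  let cocone : Cocone (pruferDiagram R p hp) :=
    { pt := ModuleCat.of R M
      ι := NatTrans.ofSequence g hnat }
  let φ : (prufer R p hp : Type) →ₗ[R] M :=
    show (prufer R p hp : Type) →ₗ[R] M from (colimit.desc (pruferDiagram R p hp) cocone).hom
  have hφι : ∀ (n : ℕ) (t : (pruferDiagram R p hp).obj n),
      φ (colimit.ι (pruferDiagram R p hp) n t) = g n t := by
    intro n t
    show (colimit.ι (pruferDiagram R p hp) n ≫ colimit.desc (pruferDiagram R p hp) cocone) t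
      = g n t
    rw [colimit.ι_desc]
    rfl
  have hgn_ker : ∀ (n : ℕ) (r : R), r • y n = 0 → r ∈ ((P R) ^ (n+1) : Ideal R) := by
    intro n r hr
    by_contra hmem
    obtain ⟨c, hc⟩ := exists_mul_eq_pow R p hp n r hmem
    exact hx0 (by rw [← hyx n, ← hc, mul_smul, hr, smul_zero])
  have hφinj : Function.Injective φ := by
    intro z w hzw
    have hsub : φ (z - w) = 0 := by rw [map_sub, hzw, sub_self]
    have hzw0 : z - w = 0 := by
      obtain ⟨n, r, hr⟩ := iota_exists R p hp (z - w)
      erw [← hr, hφι, hg_mk] at hsub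
      have hmem := hgn_ker n r hsub
      rw [← hr]
      have hmk0 : (Submodule.Quotient.mk r : R ⧸ ((P R) ^ (n+1) : Ideal R)) = 0 :=
        (Submodule.Quotient.mk_eq_zero _).mpr hmem
      rw [hmk0]; erw [map_zero]; rfl
    exact sub_eq_zero.mp hzw0
  -- prufer is injective, so `range φ` is a direct summand
  have hPinj : Module.Injective R (prufer R p hp) :=
    injective_of_divisible R p hp (prufer_divisible R p hp)
  obtain ⟨σ, hσ⟩ := hPinj.out φ hφinj LinearMap.id
  have hcompl : IsCompl (LinearMap.range φ) (LinearMap.ker σ) := by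
    constructor
    · rw [disjoint_iff, Submodule.eq_bot_iff]
      intro a ha
      rw [Submodule.mem_inf] at ha
      obtain ⟨⟨z, rfl⟩, ha2⟩ := ha
      rw [LinearMap.mem_ker] at ha2
      have h8 := hσ z
      rw [ha2] at h8
      have hz0 : z = 0 := by
        have := h8.symm
        rwa [LinearMap.id_apply] at this
      rw [hz0, map_zero]
    · rw [codisjoint_iff, eq_top_iff]
      intro m _
      have hmk : m - φ (σ m) ∈ LinearMap.ker σ := by
        rw [LinearMap.mem_ker, map_sub, hσ]
        simp
      have hmem := Submodule.add_mem_sup (LinearMap.mem_range_self φ (σ m)) hmk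
      simpa using hmem
  have e := Submodule.prodEquivOfIsCompl _ _ hcompl
  have hx_mem : x ∈ LinearMap.range φ := by
    refine ⟨colimit.ι (pruferDiagram R p hp) 0 (Submodule.Quotient.mk 1), ?_⟩
    erw [hφι, hg_mk, one_smul, hy0]
  rcases hind.2 _ _ _ _ _ _ ⟨e.symm⟩ with hrange | hker0
  · exact absurd (hrange.elim ⟨x, hx_mem⟩ 0) (fun h => hx0 (congrArg Subtype.val h))
  · have hker_bot : LinearMap.ker σ = ⊥ := Submodule.eq_bot_of_subsingleton
    have hrange_top : LinearMap.range φ = ⊤ := by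
      have hco := hcompl.codisjoint
      rwa [hker_bot, codisjoint_bot] at hco
    exact ⟨(LinearEquiv.ofBijective φ
      ⟨hφinj, LinearMap.range_eq_top.mp hrange_top⟩).symm⟩

lemma iso_fraction {M : Type} [AddCommGroup M] [Module R M]
    (hdiv : ∀ m : M, ∃ m', p • m' = m) (hind : IsIndecomposableMod R M)
    (hreg : ∀ m : M, p • m = 0 → m = 0) :
    Nonempty (M ≃ₗ[R] FractionRing R) := by
  classical
  have hbij : Function.Bijective (algebraMap R (Module.End R M) p) := by
    constructor
    · intro a b hab
      have h1 : p • a = p • b := by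
        calc p • a = (algebraMap R (Module.End R M) p) a := by
              rw [Module.algebraMap_end_apply]
          _ = (algebraMap R (Module.End R M) p) b := by rw [hab]
          _ = p • b := by rw [Module.algebraMap_end_apply]
      have h2 : p • (a - b) = 0 := by rw [smul_sub, h1, sub_self]
      exact sub_eq_zero.mp (hreg _ h2)
    · intro m
      obtain ⟨m', hm'⟩ := hdiv m
      exact ⟨m', by rw [Module.algebraMap_end_apply]; exact hm'⟩
  have hunit : ∀ s : nonZeroDivisors R, IsUnit (algebraMap R (Module.End R M) (s : R)) := by
    intro s
    have hs0 : (s : R) ≠ 0 := nonZeroDivisors.coe_ne_zero s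
    obtain ⟨a, u, hau⟩ := IsDiscreteValuationRing.eq_unit_mul_pow_irreducible hs0
      (p_irreducible R p hp)
    rw [hau, map_mul, map_pow]
    exact (u.isUnit.map (algebraMap R (Module.End R M))).mul
      (((Module.End.isUnit_iff _).mpr hbij).pow a)
  haveI hLM : IsLocalizedModule (nonZeroDivisors R) (LinearMap.id : M →ₗ[R] M) :=
    { map_units := hunit
      surj := fun m => ⟨(m, 1), by simp⟩
      exists_of_eq := fun h => ⟨1, by simpa using h⟩ }
  -- the localized module is isomorphic to `M` and is a vector space over `FractionRing R`
  let N := LocalizedModule (nonZeroDivisors R) M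
  let eN : N ≃ₗ[R] M := IsLocalizedModule.iso (nonZeroDivisors R) (LinearMap.id : M →ₗ[R] M)
  haveI : Nontrivial M := not_subsingleton_iff_nontrivial.mp hind.1
  haveI : Nontrivial N := eN.toEquiv.nontrivial
  obtain ⟨x0, hx0⟩ := exists_ne (0 : N)
  obtain ⟨W', hW'⟩ := Submodule.exists_isCompl (Submodule.span (FractionRing R) {x0})
  have e := Submodule.prodEquivOfIsCompl _ _ hW'
  rcases hind.2 _ _ _ _ _ _
      ⟨eN.symm.trans ((e.symm : N ≃ₗ[FractionRing R] _).restrictScalars R)⟩ with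
    hspan | hW'0
  · exact absurd (hspan.elim ⟨x0, Submodule.mem_span_singleton_self x0⟩ 0)
      (fun h => hx0 (congrArg Subtype.val h))
  · have hW'bot : W' = ⊥ := Submodule.eq_bot_of_subsingleton
    have hspan_top : Submodule.span (FractionRing R) {x0} = ⊤ := by
      have hco := hW'.codisjoint
      rwa [hW'bot, codisjoint_bot] at hco
    have hinj2 : Function.Injective (LinearMap.toSpanSingleton (FractionRing R) N x0) := by
      intro a b hab
      by_contra hne
      have hsub : (a - b) • x0 = 0 := by
        rw [LinearMap.toSpanSingleton_apply, LinearMap.toSpanSingleton_apply] at hab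
        rw [sub_smul, hab, sub_self]
      have hx00 : x0 = 0 := by
        have h5 := congrArg (fun m => (a - b)⁻¹ • m) hsub
        simpa [smul_smul, inv_mul_cancel₀ (sub_ne_zero.mpr hne)] using h5
      exact hx0 hx00
    have hsurj2 : Function.Surjective (LinearMap.toSpanSingleton (FractionRing R) N x0) := by
      rw [← LinearMap.range_eq_top, ← LinearMap.span_singleton_eq_range, hspan_top]
    exact ⟨eN.symm.trans (((LinearEquiv.ofBijective _ ⟨hinj2, hsurj2⟩ :
      FractionRing R ≃ₗ[FractionRing R] N).symm).restrictScalars R)⟩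

end Aux

/-- The Prüfer module `R_{P^∞}` is an injective `R`-module, and together with the fraction
field `Q(R)` it gives exactly the indecomposable injective `R`-modules up to isomorphism. -/
theorem prufer_injective_and_classification
    (p : R) (hp : P R = Ideal.span {p}) :
    Module.Injective R (prufer R p hp) ∧
    IsIndecomposableMod R (prufer R p hp) ∧
    Module.Injective R (FractionRing R) ∧
    IsIndecomposableMod R (FractionRing R) ∧
    (∀ (M : Type) (_ : AddCommGroup M) (_ : Module R M),
        Module.Injective R M → IsIndecomposableMod R M →
        Nonempty (M ≃ₗ[R] prufer R p hp) ∨ Nonempty (M ≃ₗ[R] FractionRing R)) := by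
  refine ⟨injective_of_divisible R p hp (prufer_divisible R p hp),
    indecomposable_of_uniform R p hp (prufer_nontrivial R p hp) (prufer_uniform R p hp),
    injective_of_divisible R p hp (fraction_divisible R p hp),
    indecomposable_of_uniform R p hp (fraction_nontrivial R p hp) (fraction_uniform R p hp),
    ?_⟩
  intro M _ _ hMinj hMind
  have hdiv : ∀ m : M, ∃ m', p • m' = m := divisible_of_injective R p hp hMinj
  by_cases hcase : ∃ x : M, x ≠ 0 ∧ p • x = 0
  · obtain ⟨x, hx0, hxp⟩ := hcase
    exact Or.inl (iso_prufer R p hp hdiv hMind x hx0 hxp)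
  · push_neg at hcase
    exact Or.inr (iso_fraction R p hp hdiv hMind (fun m hm => by
      by_contra h0
      exact hcase m h0 hm))

end
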